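/- Let R be a noetherian commutative ring and M an R-module. Then M is universally torsionless if and only if there exist an index set I and an injective R-linear map M → ∏_{i∈I} R whose cokernel is a flat R-module. -/

import Mathlib

open TensorProduct LinearMap

section Tau

variable (R : Type*) [CommRing R] (I : Type*)

/-- abbreviation for the evaluation map `N ⊗ (I → R) → (I → N)`. -/
noncomputable def tau (N : Type*) [AddCommGroup N] [Module R N] :
    N ⊗[R] (I → R) →ₗ[R] (I → N) :=
  TensorProduct.piScalarRightHom R R N I

@[simp]
lemma tau_tmul (N : Type*) [AddCommGroup N] [Module R N] (x : N) (f : I → R) :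
    tau R I N (x ⊗ₜ[R] f) = fun j => f j • x :=
  TensorProduct.piScalarRightHom_tmul R R N I x f

/-- Left inverse to `tau` for finite free modules. -/
noncomputable def sigmaFree (n : ℕ) :
    (I → (Fin n → R)) →ₗ[R] (Fin n → R) ⊗[R] (I → R) where
  toFun g := ∑ j : Fin n, (Pi.single j 1 : Fin n → R) ⊗ₜ[R] (fun i => g i j)
  map_add' g h := by
    rw [← Finset.sum_add_distrib]
    refine Finset.sum_congr rfl fun j _ => ?_
    rw [← TensorProduct.tmul_add]
    rfl
  map_smul' r g := by
    simp only [RingHom.id_apply]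
    rw [Finset.smul_sum]
    refine Finset.sum_congr rfl fun j _ => ?_
    rw [← TensorProduct.tmul_smul]
    rfl

lemma sigmaFree_tau (n : ℕ) (x : (Fin n → R) ⊗[R] (I → R)) :
    sigmaFree R I n (tau R I (Fin n → R) x) = x := by
  induction x with
  | zero => simp
  | add x y hx hy => simp [hx, hy]
  | tmul v f =>
      simp only [tau_tmul, sigmaFree, LinearMap.coe_mk, AddHom.coe_mk]
      have h1 : ∀ j : Fin n, (fun i => (f i • v) j) = (v j) • f := by
        intro j; funext i; simp [mul_comm]
      calc ∑ j : Fin n, (Pi.single j 1 : Fin n → R) ⊗ₜ[R] (fun i => (f i • v) j)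
          = ∑ j : Fin n, (Pi.single j (v j) : Fin n → R) ⊗ₜ[R] f := by
            refine Finset.sum_congr rfl fun j _ => ?_
            rw [h1 j, TensorProduct.tmul_smul, TensorProduct.smul_tmul']
            congr 1
            ext j'
            simp [Pi.single_apply]
        _ = v ⊗ₜ[R] f := by
            rw [← TensorProduct.sum_tmul, Finset.univ_sum_single]

lemma tau_free_injective (n : ℕ) :
    Function.Injective (tau R I (Fin n → R)) :=
  Function.LeftInverse.injective (g := sigmaFree R I n) (sigmaFree_tau R I n)

lemma tau_sigmaFree (n : ℕ) (g : I → (Fin n → R)) :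
    tau R I (Fin n → R) (sigmaFree R I n g) = g := by
  simp only [sigmaFree, LinearMap.coe_mk, AddHom.coe_mk, map_sum, tau_tmul]
  funext i
  simp only [Finset.sum_apply]
  calc ∑ j : Fin n, ((fun i' => g i' j) i • (Pi.single j 1 : Fin n → R))
      = ∑ j : Fin n, (Pi.single j (g i j) : Fin n → R) := by
        refine Finset.sum_congr rfl fun j _ => ?_
        ext j'; simp [Pi.single_apply]
    _ = g i := Finset.univ_sum_single (g i)

/-- Naturality of `tau`. -/
lemma tau_natural {X Y : Type*} [AddCommGroup X] [Module R X] [AddCommGroup Y] [Module R Y]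
    (g : X →ₗ[R] Y) :
    (tau R I Y) ∘ₗ (LinearMap.rTensor (I → R) g) = (LinearMap.compLeft g I) ∘ₗ (tau R I X) := by
  apply TensorProduct.ext'
  intro x f
  funext i
  simp

lemma tau_natural_apply {X Y : Type*} [AddCommGroup X] [Module R X] [AddCommGroup Y] [Module R Y]
    (g : X →ₗ[R] Y) (x : X ⊗[R] (I → R)) (i : I) :
    tau R I Y (LinearMap.rTensor (I → R) g x) i = g (tau R I X x i) := by
  have := congrArg (fun h => h x i) (tau_natural R I g)
  simpa using this

/-- Main technical lemma: over a noetherian ring, the evaluation map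
`N ⊗ (I → R) → (I → N)` is injective for finitely generated `N`. -/
theorem tau_injective [IsNoetherianRing R] (N : Type*) [AddCommGroup N] [Module R N]
    [Module.Finite R N] : Function.Injective (tau R I N) := by
  rw [injective_iff_map_eq_zero]
  intro x hx
  obtain ⟨k, p, hp⟩ := Module.Finite.exists_fin' R N
  obtain ⟨y, rfl⟩ := LinearMap.rTensor_surjective (I → R) (g := p) hp x
  have hK : Module.Finite R (LinearMap.ker p) := by
    rw [Module.Finite.iff_fg]
    exact IsNoetherian.noetherian _
  obtain ⟨l, f', hf'⟩ := Module.Finite.exists_fin' R (LinearMap.ker p)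
  set q : (Fin l → R) →ₗ[R] (Fin k → R) := (LinearMap.ker p).subtype ∘ₗ f' with hq
  have hrange : LinearMap.range q = LinearMap.ker p := by
    rw [hq, LinearMap.range_comp, LinearMap.range_eq_top.mpr hf', Submodule.map_top,
      Submodule.range_subtype]
  have hg : ∀ i, p (tau R I (Fin k → R) y i) = 0 := by
    intro i
    have := tau_natural_apply R I p y i
    rw [hx] at this
    simpa using this.symm
  have hchoice : ∀ i : I, ∃ c : Fin l → R, q c = tau R I (Fin k → R) y i := by
    intro i
    have : tau R I (Fin k → R) y i ∈ LinearMap.range q := by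
      rw [hrange, LinearMap.mem_ker]; exact hg i
    exact this
  choose c hc using hchoice
  set z : (Fin l → R) ⊗[R] (I → R) := sigmaFree R I l c with hz
  have h1 : tau R I (Fin k → R) (LinearMap.rTensor (I → R) q z) = tau R I (Fin k → R) y := by
    funext i
    rw [tau_natural_apply R I q z i, hz, tau_sigmaFree]
    exact hc i
  have h2 : LinearMap.rTensor (I → R) q z = y := tau_free_injective R I k h1
  have h3 : p ∘ₗ q = 0 := by
    apply LinearMap.ext
    intro v
    have : q v ∈ LinearMap.ker p := hrange ▸ LinearMap.mem_range_self q v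
    simpa using this
  have h4 : LinearMap.rTensor (I → R) p y = LinearMap.rTensor (I → R) (p ∘ₗ q) z := by
    rw [← h2, ← LinearMap.rTensor_comp_apply]
  rw [h4, h3, LinearMap.rTensor_zero]
  rfl

end Tau

/-- The natural map `M ⊗ N → Hom(M*, N)`, `m ⊗ n ↦ (w ↦ w m • n)`. -/
noncomputable def natMap (R : Type*) [CommRing R] (M : Type*) [AddCommGroup M] [Module R M]
    (N : Type*) [AddCommGroup N] [Module R N] :
    M ⊗[R] N →ₗ[R] ((M →ₗ[R] R) →ₗ[R] N) :=
  (dualTensorHom R (Module.Dual R M) N).comp (LinearMap.rTensor N (Module.Dual.eval R M))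

@[simp]
lemma natMap_tmul {R : Type*} [CommRing R] {M : Type*} [AddCommGroup M] [Module R M]
    {N : Type*} [AddCommGroup N] [Module R N] (m : M) (n : N) (w : M →ₗ[R] R) :
    natMap R M N (m ⊗ₜ[R] n) w = w m • n := by
  simp [natMap]

section Trace

universe u v

variable {R : Type u} [CommRing R] {M : Type v} [AddCommGroup M] [Module R M]

lemma small_quot_ann (J : Ideal R) (hJ : Module.annihilator R M ≤ J) :
    Small.{v} (R ⧸ J) := by
  set A := Module.annihilator R M
  set φ₀ : R →ₗ[R] (M → M) := LinearMap.pi (fun m0 : M => LinearMap.toSpanSingleton R M m0)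
  have hker : LinearMap.ker φ₀ = A := by
    ext r
    simp only [LinearMap.mem_ker, Module.mem_annihilator, A]
    constructor
    · intro hr m0
      exact congrFun hr m0
    · intro hr
      funext m0
      exact hr m0
  have h1 : Small.{v} (R ⧸ A) := by
    apply small_of_injective (f := (Submodule.liftQ A φ₀ hker.ge))
    rw [← LinearMap.ker_eq_bot, Submodule.ker_liftQ_eq_bot A φ₀ hker.ge hker.le]
  have h2 : Function.Surjective (Submodule.mapQ A J LinearMap.id hJ) := by
    rintro ⟨x⟩
    exact ⟨Submodule.Quotient.mk x, rfl⟩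
  exact small_of_surjective h2

/-- Trace representation: every element of a universally torsionless module is a combination
`∑ (w k m) • x k`. -/
theorem trace_rep
    (h : ∀ (N : Type v) [AddCommGroup N] [Module R N], Function.Injective (natMap R M N))
    (m : M) :
    ∃ (n : ℕ) (w : Fin n → (M →ₗ[R] R)) (x : Fin n → M), m = ∑ k, (w k m) • x k := by
  classical
  set T : Ideal R := LinearMap.range (Module.Dual.eval R M m) with hT
  set J : Ideal R := T ⊔ Module.annihilator R M with hJdef
  haveI : Small.{v} (R ⧸ J) := small_quot_ann J le_sup_right
  set e : (R ⧸ J) ≃ₗ[R] Shrink.{v} (R ⧸ J) := (Shrink.linearEquiv R (R ⧸ J)).symm with he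
  set x : M ⊗[R] Shrink.{v} (R ⧸ J) := m ⊗ₜ[R] (e (Submodule.Quotient.mk 1)) with hx
  have hzero : natMap R M (Shrink.{v} (R ⧸ J)) x = 0 := by
    apply LinearMap.ext
    intro w
    have hwm : w m ∈ J := by
      rw [hJdef]
      exact Ideal.mem_sup_left (LinearMap.mem_range_self (Module.Dual.eval R M m) w)
    rw [hx, natMap_tmul, ← map_smul]
    have : (w m) • (Submodule.Quotient.mk (1:R) : R ⧸ J) = 0 := by
      rw [← Submodule.Quotient.mk_smul, smul_eq_mul, mul_one]
      exact (Submodule.Quotient.mk_eq_zero J).mpr hwm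
    rw [this, map_zero]
    rfl
  have hx0 : x = 0 := by
    apply h (Shrink.{v} (R ⧸ J))
    rw [hzero, map_zero]
  have hmk : (m ⊗ₜ[R] (Submodule.Quotient.mk (1:R) : R ⧸ J)) = 0 := by
    apply (LinearEquiv.lTensor M e).injective
    rw [map_zero]
    calc (LinearEquiv.lTensor M e) (m ⊗ₜ[R] (Submodule.Quotient.mk (1:R) : R ⧸ J))
        = m ⊗ₜ[R] (e (Submodule.Quotient.mk 1)) := by
          simp [LinearEquiv.lTensor]
      _ = 0 := by rw [← hx, hx0]
  have hmem : m ∈ J • (⊤ : Submodule R M) := by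
    rw [← Submodule.Quotient.mk_eq_zero]
    have := congrArg (tensorQuotEquivQuotSMul M J) hmk
    rw [map_zero] at this
    rw [← this]
    have h1 : (Submodule.Quotient.mk (1:R) : R ⧸ J) = Ideal.Quotient.mk J (1:R) := rfl
    rw [h1, tensorQuotEquivQuotSMul_tmul_mk, one_smul]
  have hmemT : m ∈ T • (⊤ : Submodule R M) := by
    rw [hJdef, Submodule.sup_smul] at hmem
    have hbot : Module.annihilator R M • (⊤ : Submodule R M) = ⊥ := by
      rw [eq_bot_iff]
      apply Submodule.smul_le.mpr
      intro r hr n _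
      exact Module.mem_annihilator.mp hr n
    rwa [hbot, sup_bot_eq] at hmem
  -- extract finite representation
  have key : ∀ y, y ∈ T • (⊤ : Submodule R M) →
      ∃ (n : ℕ) (w : Fin n → (M →ₗ[R] R)) (x : Fin n → M), y = ∑ k, (w k m) • x k := by
    intro y hy
    refine Submodule.smul_induction_on hy ?_ ?_
    · intro r hr x0 _
      obtain ⟨w₀, rfl⟩ := hr
      exact ⟨1, fun _ => w₀, fun _ => x0, by simp⟩
    · rintro y z ⟨n1, w1, x1, rfl⟩ ⟨n2, w2, x2, rfl⟩
      refine ⟨n1 + n2, Fin.append w1 w2, Fin.append x1 x2, ?_⟩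
      rw [Fin.sum_univ_add]
      congr 1
      · refine Finset.sum_congr rfl fun k _ => by simp
      · refine Finset.sum_congr rfl fun k _ => by simp
  exact key m hmemT

end Trace

section Forward

universe u v

variable {R : Type u} [CommRing R] [IsNoetherianRing R]
  {M : Type v} [AddCommGroup M] [Module R M]

theorem forward
    (h : ∀ (N : Type v) [AddCommGroup N] [Module R N], Function.Injective (natMap R M N)) :
    ∃ (I : Type v) (iota : M →ₗ[R] (I → R)),
      Function.Injective iota ∧ Module.Flat R ((I → R) ⧸ LinearMap.range iota) := by
  classical
  choose nm w xs hrep using trace_rep h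
  set I : Type v := (m : M) × Fin (nm m) with hI
  set iota : M →ₗ[R] (I → R) := LinearMap.pi (fun i : I => w i.1 i.2) with hiota
  have hiota_apply : ∀ (a : M) (i : I), iota a i = w i.1 i.2 a := fun a i => rfl
  have hinj : Function.Injective iota := by
    rw [injective_iff_map_eq_zero]
    intro a ha
    have hz : ∀ k : Fin (nm a), w a k a = 0 := by
      intro k
      have := congrFun (congrArg (fun g => (g : I → R)) ha) ⟨a, k⟩
      simpa [hiota_apply] using this
    rw [hrep a]
    simp [hz]
  refine ⟨I, iota, hinj, ?_⟩
  set S : Submodule R (I → R) := LinearMap.range iota with hS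
  set π : (I → R) →ₗ[R] ((I → R) ⧸ S) := S.mkQ with hπ
  rw [Module.Flat.iff_rTensor_injective']
  intro J
  rw [injective_iff_map_eq_zero]
  intro ξ hξ
  obtain ⟨η, rfl⟩ := LinearMap.lTensor_surjective (↥J) (g := π) (Submodule.mkQ_surjective S) ξ
  set μP : (↥J) ⊗[R] (I → R) →ₗ[R] (I → R) :=
    (TensorProduct.lid R (I → R)).toLinearMap ∘ₗ LinearMap.rTensor (I → R) J.subtype with hμP
  set μQ : (↥J) ⊗[R] ((I → R) ⧸ S) →ₗ[R] ((I → R) ⧸ S) :=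
    (TensorProduct.lid R ((I → R) ⧸ S)).toLinearMap ∘ₗ LinearMap.rTensor ((I → R) ⧸ S) J.subtype with hμQ
  have hsq : π ∘ₗ μP = μQ ∘ₗ LinearMap.lTensor (↥J) π := by
    apply TensorProduct.ext'
    intro j f
    simp [hμP, hμQ]
  set p : (I → R) := μP η with hp
  have hπp : π p = 0 := by
    have := congrArg (fun g => g η) hsq
    simp only [LinearMap.comp_apply] at this
    rw [hp, this, hμQ]
    simp only [LinearMap.comp_apply, hξ, map_zero]
  have hpS : p ∈ S := by
    have : p ∈ LinearMap.ker π := LinearMap.mem_ker.mpr hπp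
    rwa [hπ, Submodule.ker_mkQ] at this
  obtain ⟨m, hm⟩ := hpS
  have hcoords : ∀ (θ : (↥J) ⊗[R] (I → R)) (i : I), μP θ i ∈ J := by
    intro θ
    induction θ with
    | zero => intro i; rw [map_zero]; simpa using J.zero_mem
    | tmul j f =>
        intro i
        have : μP (j ⊗ₜ[R] f) = (j : R) • f := by simp [hμP]
        rw [this]
        exact J.mul_mem_right (f i) j.2
    | add a b ha hb =>
        intro i
        rw [map_add]
        exact J.add_mem (ha i) (hb i)
  have hcoef : ∀ k : Fin (nm m), w m k m ∈ J := by
    intro k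
    have : w m k m = p ⟨m, k⟩ := by rw [← hm]; rfl
    rw [this]
    exact hcoords η ⟨m, k⟩
  set η' : (↥J) ⊗[R] (I → R) := ∑ k : Fin (nm m), (⟨w m k m, hcoef k⟩ : ↥J) ⊗ₜ[R] iota (xs m k)
    with hη'
  have hμη' : μP η' = p := by
    rw [hη', map_sum]
    have h1 : ∀ k : Fin (nm m), μP ((⟨w m k m, hcoef k⟩ : ↥J) ⊗ₜ[R] iota (xs m k))
        = (w m k m) • iota (xs m k) := by
      intro k; simp [hμP]
    rw [Finset.sum_congr rfl (fun k _ => h1 k)]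
    rw [← hm]
    calc ∑ k : Fin (nm m), (w m k m) • iota (xs m k)
        = iota (∑ k : Fin (nm m), (w m k m) • xs m k) := by
          rw [map_sum]
          exact Finset.sum_congr rfl fun k _ => (map_smul iota _ _).symm
      _ = iota m := by rw [← hrep m]
  have hfin : Module.Finite R ↥J := Module.Finite.iff_fg.mpr (IsNoetherian.noetherian J)
  have hμinj : Function.Injective μP := by
    have h1 : Function.Injective (LinearMap.compLeft (J.subtype) I) := by
      intro g g' hgg
      funext i
      exact Subtype.coe_injective (congrFun (congrArg (fun z => (z : I → R)) hgg) i)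
    have hcomp : (LinearMap.compLeft (J.subtype) I) ∘ₗ tau R I ↥J = μP := by
      apply TensorProduct.ext'
      intro j f
      funext i
      simp [hμP, tau_tmul, mul_comm, Pi.smul_apply, smul_eq_mul]
    rw [← hcomp]
    exact (h1.comp (tau_injective R I ↥J)).comp (fun a b hab => hab) |>.comp (fun a b hab => hab)
  have hηη' : η = η' := hμinj (by rw [hμη', hp])
  rw [hηη', hη', map_sum]
  apply Finset.sum_eq_zero
  intro k _
  rw [LinearMap.lTensor_tmul]
  have : π (iota (xs m k)) = 0 := by
    rw [hπ, ← LinearMap.mem_ker, Submodule.ker_mkQ]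
    exact LinearMap.mem_range_self iota (xs m k)
  rw [this, TensorProduct.tmul_zero]

end Forward

section Backward

universe u v

variable {R : Type u} [CommRing R] [IsNoetherianRing R]
  {M : Type v} [AddCommGroup M] [Module R M]

/-- auxiliary evaluation map `(Fin n → R) ⊗ X → (Fin n → X)`. -/
noncomputable def lam (n : ℕ) (X : Type*) [AddCommGroup X] [Module R X] :
    ((Fin n → R) ⊗[R] X) →ₗ[R] (Fin n → X) :=
  tau R (Fin n) X ∘ₗ (TensorProduct.comm R (Fin n → R) X).toLinearMap

@[simp]
lemma lam_tmul (n : ℕ) (X : Type*) [AddCommGroup X] [Module R X] (f : Fin n → R) (x : X) :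
    lam (R := R) n X (f ⊗ₜ[R] x) = fun j => f j • x := by
  simp [lam]

lemma lam_sum_single (n : ℕ) (X : Type*) [AddCommGroup X] [Module R X] (v : Fin n → X) :
    lam (R := R) n X (∑ j : Fin n, (Pi.single j 1 : Fin n → R) ⊗ₜ[R] v j) = v := by
  classical
  rw [map_sum]
  funext j'
  simp only [lam_tmul, Finset.sum_apply]
  calc ∑ j : Fin n, (Pi.single j 1 : Fin n → R) j' • v j
      = ∑ j : Fin n, (if j = j' then v j else 0) := by
        refine Finset.sum_congr rfl fun j _ => ?_
        by_cases hj : j = j'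
        · subst hj; simp
        · simp [Pi.single_apply, hj]
    _ = v j' := by simp
  
lemma lam_natural (n : ℕ) {X Y : Type*} [AddCommGroup X] [Module R X] [AddCommGroup Y]
    [Module R Y] (g : X →ₗ[R] Y) (z : (Fin n → R) ⊗[R] X) :
    lam (R := R) n Y (LinearMap.lTensor (Fin n → R) g z) = fun j => g (lam (R := R) n X z j) := by
  induction z with
  | zero => funext j; simp
  | tmul f x => funext j; simp
  | add a b ha hb =>
      funext j
      rw [map_add, map_add]
      have := congrFun ha j
      have := congrFun hb j
      simp_all

/-- Key purity lemma: if the cokernel of `iota` is flat, then a tuple of elements of `M` whose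
"coordinate tuples" all lie in a submodule `K ≤ Rⁿ` comes from `M ⊗ K`. -/
lemma GW {I : Type*} (iota : M →ₗ[R] (I → R)) (hinj : Function.Injective iota)
    (hflat : Module.Flat R ((I → R) ⧸ LinearMap.range iota))
    {n : ℕ} (K : Submodule R (Fin n → R)) (mv : Fin n → M)
    (hyp : ∀ i : I, (fun j => iota (mv j) i) ∈ K) :
    ∃ ζ : M ⊗[R] ↥K, tau R (Fin n) M (LinearMap.lTensor M K.subtype ζ) = mv := by
  classical
  set S : Submodule R (I → R) := LinearMap.range iota with hS
  set π : (I → R) →ₗ[R] ((I → R) ⧸ S) := S.mkQ with hπ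
  have hKfin : Module.Finite R ↥K := Module.Finite.iff_fg.mpr (IsNoetherian.noetherian K)
  obtain ⟨l, f', hf'⟩ := Module.Finite.exists_fin' R ↥K
  set g : I → ↥K := fun i => ⟨fun j => iota (mv j) i, hyp i⟩ with hg
  have hchoice : ∀ i : I, ∃ c : Fin l → R, f' c = g i := fun i => hf' (g i)
  choose c hc using hchoice
  set η₀ : (Fin l → R) ⊗[R] (I → R) := sigmaFree R I l c with hη₀
  set η₁ : (↥K) ⊗[R] (I → R) := LinearMap.rTensor (I → R) f' η₀ with hη₁
  set gF : I → (Fin n → R) := fun i => fun j => iota (mv j) i with hgF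
  set B : (Fin n → R) ⊗[R] (I → R) := sigmaFree R I n gF with hB
  -- η and B have the same tau-image, hence are equal
  have hη_eq_B : LinearMap.rTensor (I → R) K.subtype η₁ = B := by
    apply tau_free_injective R I n
    rw [hB, tau_sigmaFree]
    funext i
    rw [tau_natural_apply, hη₁, tau_natural_apply, hη₀, tau_sigmaFree, hc]
    rfl
  -- push to the quotient
  have hBπ : LinearMap.lTensor (Fin n → R) π B = 0 := by
    have hB' : B = ∑ j : Fin n, (Pi.single j 1 : Fin n → R) ⊗ₜ[R] iota (mv j) := by
      rw [hB]
      rfl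
    rw [hB', map_sum]
    apply Finset.sum_eq_zero
    intro j _
    rw [LinearMap.lTensor_tmul]
    have : π (iota (mv j)) = 0 := by
      rw [hπ, ← LinearMap.mem_ker, Submodule.ker_mkQ]
      exact LinearMap.mem_range_self iota (mv j)
    rw [this, TensorProduct.tmul_zero]
  have hπη₁ : LinearMap.lTensor (↥K) π η₁ = 0 := by
    apply Module.Flat.rTensor_preserves_injective_linearMap (M := (I → R) ⧸ S)
      K.subtype (Submodule.injective_subtype K)
    rw [map_zero]
    calc LinearMap.rTensor ((I → R) ⧸ S) K.subtype (LinearMap.lTensor (↥K) π η₁)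
        = LinearMap.lTensor (Fin n → R) π (LinearMap.rTensor (I → R) K.subtype η₁) := by
          rw [← LinearMap.comp_apply, LinearMap.rTensor_comp_lTensor,
            ← LinearMap.lTensor_comp_rTensor, LinearMap.comp_apply]
      _ = 0 := by rw [hη_eq_B, hBπ]
  -- use exactness to lift to M
  have hExact : Function.Exact iota π := by
    rw [hπ]
    intro y
    constructor
    · intro hy
      have : y ∈ LinearMap.ker S.mkQ := LinearMap.mem_ker.mpr hy
      rwa [Submodule.ker_mkQ] at this
    · rintro ⟨m0, rfl⟩
      rw [← LinearMap.mem_ker, Submodule.ker_mkQ]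
      exact LinearMap.mem_range_self iota m0
  have hTexact := lTensor_exact (↥K) hExact (Submodule.mkQ_surjective S)
  obtain ⟨ζK, hζK⟩ := (hTexact η₁).mp hπη₁
  -- transport back
  set θ : (Fin n → R) ⊗[R] M := LinearMap.rTensor M K.subtype ζK with hθ
  have hBθ : B = LinearMap.lTensor (Fin n → R) iota θ := by
    rw [← hη_eq_B, ← hζK, hθ]
    rw [← LinearMap.comp_apply, LinearMap.rTensor_comp_lTensor,
      ← LinearMap.lTensor_comp_rTensor, LinearMap.comp_apply]
  have hmv : mv = lam (R := R) n M θ := by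
    have h1 : lam (R := R) n ((I → R)) B = fun j => iota (mv j) := by
      have hB' : B = ∑ j : Fin n, (Pi.single j 1 : Fin n → R) ⊗ₜ[R] iota (mv j) := by
        rw [hB]; rfl
      rw [hB', lam_sum_single]
    have h2 : lam (R := R) n ((I → R)) B = fun j => iota (lam (R := R) n M θ j) := by
      rw [hBθ, lam_natural]
    funext j
    apply hinj
    calc iota (mv j) = lam (R := R) n ((I → R)) B j := by rw [h1]
      _ = iota (lam (R := R) n M θ j) := by rw [h2]
  refine ⟨TensorProduct.comm R (↥K) M ζK, ?_⟩
  have hcommnat : LinearMap.lTensor M K.subtype (TensorProduct.comm R (↥K) M ζK)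
      = TensorProduct.comm R (Fin n → R) M θ := by
    rw [hθ]
    have : (LinearMap.lTensor M K.subtype) ∘ₗ (TensorProduct.comm R (↥K) M).toLinearMap
        = (TensorProduct.comm R (Fin n → R) M).toLinearMap ∘ₗ LinearMap.rTensor M K.subtype := by
      apply TensorProduct.ext'
      intro k m
      simp
    exact congrArg (fun hmap => hmap ζK) this
  rw [hcommnat]
  rw [hmv]
  rfl

end Backward

section BackwardMain

universe u v

variable {R : Type u} [CommRing R] [IsNoetherianRing R]
  {M : Type v} [AddCommGroup M] [Module R M]

theorem backward {I : Type*} (iota : M →ₗ[R] (I → R)) (hinj : Function.Injective iota)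
    (hflat : Module.Flat R ((I → R) ⧸ LinearMap.range iota))
    (N : Type*) [AddCommGroup N] [Module R N] :
    Function.Injective (natMap R M N) := by
  classical
  rw [injective_iff_map_eq_zero]
  intro x hx
  obtain ⟨s, hs⟩ := TensorProduct.exists_finset x
  set N₀ : Submodule R N := Submodule.span R (↑(s.image Prod.snd) : Set N) with hN₀
  have hN₀fg : N₀.FG := ⟨s.image Prod.snd, rfl⟩
  haveI hN₀fin : Module.Finite R ↥N₀ := Module.Finite.iff_fg.mpr hN₀fg
  have hmem : ∀ p ∈ s, (p : M × N).2 ∈ N₀ := by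
    intro p hp
    exact Submodule.subset_span (Finset.mem_coe.mpr (Finset.mem_image_of_mem Prod.snd hp))
  set x₀ : M ⊗[R] ↥N₀ := ∑ p ∈ s.attach, p.1.1 ⊗ₜ[R] (⟨p.1.2, hmem p.1 p.2⟩ : ↥N₀) with hx₀def
  have hx₀ : LinearMap.lTensor M N₀.subtype x₀ = x := by
    rw [hx₀def, map_sum]
    simp only [LinearMap.lTensor_tmul, Submodule.coe_subtype]
    rw [Finset.sum_attach s (fun p => p.1 ⊗ₜ[R] p.2), hs]
  -- naturality square for the inclusion N₀ ⊆ N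
  have hsquare : ∀ (y : M ⊗[R] ↥N₀) (wq : M →ₗ[R] R),
      natMap R M N (LinearMap.lTensor M N₀.subtype y) wq
        = N₀.subtype (natMap R M ↥N₀ y wq) := by
    intro y wq
    induction y with
    | zero => simp
    | tmul m nn => simp
    | add a b ha hb => rw [map_add, map_add, map_add, LinearMap.add_apply,
        LinearMap.add_apply, ha, hb, map_add]
  have hnm : natMap R M ↥N₀ x₀ = 0 := by
    apply LinearMap.ext
    intro wq
    have h1 : N₀.subtype (natMap R M ↥N₀ x₀ wq) = 0 := by
      rw [← hsquare x₀ wq, hx₀, hx]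
      rfl
    have h2 := Submodule.injective_subtype N₀ (by rw [h1, map_zero] : N₀.subtype _ = N₀.subtype 0)
    rw [h2]
    rfl
  -- choose a finite presentation
  obtain ⟨n, pr, hpr⟩ := Module.Finite.exists_fin' R ↥N₀
  obtain ⟨xt, hxt⟩ := LinearMap.lTensor_surjective M (g := pr) hpr x₀
  set mv : Fin n → M := tau R (Fin n) M xt with hmv
  set K : Submodule R (Fin n → R) := LinearMap.ker pr with hK
  -- key identity
  have hkey : ∀ (z : M ⊗[R] (Fin n → R)) (wq : M →ₗ[R] R),
      natMap R M ↥N₀ (LinearMap.lTensor M pr z) wq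
        = pr (fun j => wq (tau R (Fin n) M z j)) := by
    intro z wq
    induction z with
    | zero =>
        rw [map_zero, map_zero, LinearMap.zero_apply]
        have : (fun j => wq (tau R (Fin n) M (0 : M ⊗[R] (Fin n → R)) j)) = (0 : Fin n → R) := by
          funext j; rw [map_zero]; simp
        rw [this, map_zero]
    | tmul m f =>
        rw [LinearMap.lTensor_tmul, natMap_tmul, tau_tmul]
        have : (fun j => wq (f j • m)) = wq m • f := by
          funext j
          rw [map_smul]
          simp [mul_comm]
        rw [this, map_smul]
    | add a b ha hb =>
        rw [map_add, map_add, LinearMap.add_apply, ha, hb]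
        have : (fun j => wq (tau R (Fin n) M (a + b) j))
            = (fun j => wq (tau R (Fin n) M a j)) + (fun j => wq (tau R (Fin n) M b j)) := by
          funext j
          rw [map_add]
          simp
        rw [this, map_add]
  have hyp : ∀ i : I, (fun j => iota (mv j) i) ∈ K := by
    intro i
    rw [hK, LinearMap.mem_ker]
    have h1 := hkey xt ((LinearMap.proj i) ∘ₗ iota)
    rw [hxt, hnm] at h1
    have : (fun j => iota (mv j) i) = fun j => ((LinearMap.proj i) ∘ₗ iota) (mv j) := rfl
    rw [this]
    rw [← h1]
    rfl
  obtain ⟨ζ, hζ⟩ := GW iota hinj hflat K mv hyp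
  have htaufin : Function.Injective (tau R (Fin n) M) := by
    intro a b hab
    apply (TensorProduct.piScalarRight R R M (Fin n)).injective
    rw [TensorProduct.piScalarRight_apply, TensorProduct.piScalarRight_apply]
    exact hab
  have hxt_eq : xt = LinearMap.lTensor M K.subtype ζ := by
    apply htaufin
    rw [hζ, hmv]
  have hprK : pr ∘ₗ K.subtype = 0 := by
    apply LinearMap.ext
    rintro ⟨v, hv⟩
    simpa using (LinearMap.mem_ker.mp hv : pr v = 0)
  have hx₀0 : x₀ = 0 := by
    rw [← hxt, hxt_eq, ← LinearMap.lTensor_comp_apply, hprK, LinearMap.lTensor_zero]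
    rfl
  rw [← hx₀, hx₀0, map_zero]

end BackwardMain

theorem stmt8 (R : Type u) [CommRing R] [IsNoetherianRing R]
    (M : Type v) [AddCommGroup M] [Module R M] :
    (∀ (N : Type v) [AddCommGroup N] [Module R N], Function.Injective (natMap R M N)) ↔
      ∃ (I : Type v) (iota : M →ₗ[R] (I → R)),
        Function.Injective iota ∧ Module.Flat R ((I → R) ⧸ LinearMap.range iota) := by
  constructor
  · exact forward
  · rintro ⟨I, iota, hinj, hflat⟩ N _ _
    exact backward iota hinj hflat N
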